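/- Let Q be a cyclic convex quadrilateral in ℝ² that is not a parallelogram. Then Q is a Besant quadrilateral if and only if Q is orthodiagonal, i.e., there exists a non-circular ellipse inscribed in Q with one focus at the circumcenter EP of Q if and only if the diagonals of Q are perpendicular. -/

import Mathlib

open Set

noncomputable section

/-- Points of the ellipse with foci `f₁`, `f₂` and major-axis length `2*a`. -/
def EllipseSet (f₁ f₂ : ℂ) (a : ℝ) : Set ℂ := {z : ℂ | dist z f₁ + dist z f₂ = 2 * a}

/-- `E` is the (possibly circular) ellipse with foci `f₁, f₂` and semi-major axis `a`.
It is a circle precisely when `f₁ = f₂`. -/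
def IsEllipse (E : Set ℂ) (f₁ f₂ : ℂ) (a : ℝ) : Prop :=
  dist f₁ f₂ < 2 * a ∧ E = EllipseSet f₁ f₂ a

/-- The full line through `P` and `Q`. -/
def LineThrough (P Q : ℂ) : Set ℂ := {z : ℂ | ∃ θ : ℝ, z = P + θ • (Q - P)}

/-- `E` is tangent to the side `[P,Q]` at `ζ`: the line through `P` and `Q` meets `E`
in the single point `ζ`, which lies on the closed segment `[P,Q]`. -/
def TangentToSideAt (E : Set ℂ) (P Q ζ : ℂ) : Prop :=
  ζ ∈ segment ℝ P Q ∧ E ∩ LineThrough P Q = {ζ}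

/-- `E` is tangent to the side `[P,Q]`. -/
def TangentToSide (E : Set ℂ) (P Q : ℂ) : Prop := ∃ ζ, TangentToSideAt E P Q ζ

/-- A curve `E` is inscribed in the quadrilateral `A₁A₂A₃A₄` (vertices in order)
if it is tangent to each of the four sides. -/
def InscribedInQuad (E : Set ℂ) (A₁ A₂ A₃ A₄ : ℂ) : Prop :=
  TangentToSide E A₁ A₂ ∧ TangentToSide E A₂ A₃ ∧
    TangentToSide E A₃ A₄ ∧ TangentToSide E A₄ A₁

/-- `A₁A₂A₃A₄` is a convex quadrilateral with the vertices listed in cyclic order: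
the four points are in convex position and the diagonals `A₁A₃`, `A₂A₄` meet. -/
def IsConvexQuad (A₁ A₂ A₃ A₄ : ℂ) : Prop :=
  A₁ ∉ convexHull ℝ ({A₂, A₃, A₄} : Set ℂ) ∧
  A₂ ∉ convexHull ℝ ({A₁, A₃, A₄} : Set ℂ) ∧
  A₃ ∉ convexHull ℝ ({A₁, A₂, A₄} : Set ℂ) ∧
  A₄ ∉ convexHull ℝ ({A₁, A₂, A₃} : Set ℂ) ∧
  (segment ℝ A₁ A₃ ∩ segment ℝ A₂ A₄).Nonempty

def IsParallelogram (A₁ A₂ A₃ A₄ : ℂ) : Prop := A₁ + A₃ = A₂ + A₄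

/-- The diagonals `A₁A₃` and `A₂A₄` are perpendicular. -/
def Orthodiagonal (A₁ A₂ A₃ A₄ : ℂ) : Prop :=
  (A₃ - A₁).re * (A₄ - A₂).re + (A₃ - A₁).im * (A₄ - A₂).im = 0

/-- `P` is equidistant from the four points (the circumcenter, when they are concyclic). -/
def IsCircCenter (P A₁ A₂ A₃ A₄ : ℂ) : Prop :=
  dist P A₁ = dist P A₂ ∧ dist P A₂ = dist P A₃ ∧ dist P A₃ = dist P A₄

/-- `P` is the intersection point of the diagonals `A₁A₃` and `A₂A₄`. -/
def IsDiagPoint (P A₁ A₂ A₃ A₄ : ℂ) : Prop :=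
  P ∈ segment ℝ A₁ A₃ ∧ P ∈ segment ℝ A₂ A₄

/-- The plane vectors `z` and `w` are parallel. -/
def Para (z w : ℂ) : Prop := z.re * w.im = z.im * w.re

/-- The quadrilateral `A₁A₂A₃A₄` has (at least) one pair of parallel opposite sides. -/
def IsTrapezoid (A₁ A₂ A₃ A₄ : ℂ) : Prop :=
  Para (A₂ - A₁) (A₄ - A₃) ∨ Para (A₃ - A₂) (A₁ - A₄)

set_option maxHeartbeats 1600000
section BsntAux

lemma dist_sq_complex (z w : ℂ) : dist z w ^ 2 = (z-w).re^2 + (z-w).im^2 := by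
  rw [Complex.dist_eq, Complex.sq_norm, Complex.normSq_apply]; ring

lemma dist_eq_of_sq {z w u v : ℂ} (h : (z-w).re^2 + (z-w).im^2 = (u-v).re^2 + (u-v).im^2) :
    dist z w = dist u v := by
  have h1 : dist z w ^ 2 = dist u v ^ 2 := by rw [dist_sq_complex, dist_sq_complex]; exact h
  nlinarith [dist_nonneg (x := z) (y := w), dist_nonneg (x := u) (y := v)]

lemma sq_of_dist_eq {z w u v : ℂ} (h : dist z w = dist u v) :
    (z-w).re^2 + (z-w).im^2 = (u-v).re^2 + (u-v).im^2 := by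
  rw [← dist_sq_complex, ← dist_sq_complex, h]

lemma dist_eq_of_sq' {z w : ℂ} {a : ℝ} (ha : 0 ≤ a)
    (h : (z-w).re^2 + (z-w).im^2 = a^2) : dist z w = a := by
  have h1 : dist z w ^ 2 = a ^ 2 := by rw [dist_sq_complex]; exact h
  nlinarith [dist_nonneg (x := z) (y := w)]

lemma sub_ne_zero_sq {z w : ℂ} (h : z ≠ w) : 0 < (z-w).re^2 + (z-w).im^2 := by
  rcases lt_or_eq_of_le (by positivity : (0:ℝ) ≤ (z-w).re^2 + (z-w).im^2) with h' | h'
  · exact h'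
  · exfalso; apply h
    have hre : (z-w).re = 0 := by nlinarith [sq_nonneg (z-w).re, sq_nonneg (z-w).im]
    have him : (z-w).im = 0 := by nlinarith [sq_nonneg (z-w).re, sq_nonneg (z-w).im]
    exact sub_eq_zero.mp (Complex.ext hre him)

lemma mem_line_iff {P Q z : ℂ} (hPQ : P ≠ Q) :
    z ∈ LineThrough P Q ↔ (Q-P).re * (z-P).im - (Q-P).im * (z-P).re = 0 := by
  constructor
  · rintro ⟨θ, rfl⟩
    simp only [add_sub_cancel_left, Complex.smul_re, Complex.smul_im, smul_eq_mul]
    ring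
  · intro h
    have hd : 0 < (Q-P).re^2 + (Q-P).im^2 := sub_ne_zero_sq (fun hh => hPQ hh.symm)
    simp only [Complex.sub_re, Complex.sub_im] at h hd
    refine ⟨((z-P).re*(Q-P).re + (z-P).im*(Q-P).im) / ((Q-P).re^2 + (Q-P).im^2), ?_⟩
    apply Complex.ext
    · simp only [Complex.add_re, Complex.smul_re, smul_eq_mul, Complex.sub_re, Complex.sub_im]
      field_simp
      linear_combination (-(Q.im - P.im)) * h
    · simp only [Complex.add_im, Complex.smul_im, smul_eq_mul, Complex.sub_re, Complex.sub_im]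
      field_simp
      linear_combination (Q.re - P.re) * h

lemma line_reflect {O P Q : ℂ} {z : ℂ} (h : dist O P = dist O Q) (hz : z ∈ LineThrough P Q) :
    dist z O = dist z (P + Q - O) := by
  obtain ⟨θ, rfl⟩ := hz
  have hsq := sq_of_dist_eq h
  apply dist_eq_of_sq
  simp only [Complex.sub_re, Complex.sub_im, Complex.add_re, Complex.add_im,
    Complex.smul_re, Complex.smul_im, smul_eq_mul] at *
  linear_combination (1 - 2*θ) * hsq

lemma mem_segment_param {x y z : ℂ} :
    z ∈ segment ℝ x y ↔ ∃ θ : ℝ, 0 ≤ θ ∧ θ ≤ 1 ∧ z = x + θ • (y - x) := by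
  rw [segment_eq_image' ℝ x y]
  constructor
  · rintro ⟨θ, ⟨h0, h1⟩, rfl⟩; exact ⟨θ, h0, h1, rfl⟩
  · rintro ⟨θ, h0, h1, rfl⟩; exact ⟨θ, ⟨h0, h1⟩, rfl⟩

lemma seg_cross {n x y : ℂ} {c : ℝ}
    (hx : x.re*n.re + x.im*n.im ≤ c) (hy : c ≤ y.re*n.re + y.im*n.im) :
    ∃ w ∈ segment ℝ x y, w.re*n.re + w.im*n.im = c := by
  by_cases h : x.re*n.re + x.im*n.im = y.re*n.re + y.im*n.im
  · refine ⟨x, left_mem_segment ℝ x y, le_antisymm hx ?_⟩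
    rw [h]; exact hy
  · have hlt : x.re*n.re + x.im*n.im < y.re*n.re + y.im*n.im := lt_of_le_of_ne (le_trans hx hy) h
    set θ := (c - (x.re*n.re + x.im*n.im)) / ((y.re*n.re + y.im*n.im) - (x.re*n.re + x.im*n.im)) with hθ
    have hden : 0 < (y.re*n.re + y.im*n.im) - (x.re*n.re + x.im*n.im) := by linarith
    have hkey : θ * ((y.re*n.re + y.im*n.im) - (x.re*n.re + x.im*n.im))
        = c - (x.re*n.re + x.im*n.im) := by
      rw [hθ]; exact div_mul_cancel₀ _ (ne_of_gt hden)
    refine ⟨x + θ • (y - x), mem_segment_param.mpr ⟨θ, ?_, ?_, rfl⟩, ?_⟩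
    · apply div_nonneg (by linarith) (le_of_lt hden)
    · rw [hθ, div_le_one hden]; linarith
    · simp only [Complex.add_re, Complex.add_im, Complex.smul_re, Complex.smul_im,
        Complex.sub_re, Complex.sub_im, smul_eq_mul]
      linear_combination hkey

lemma core (b1x b1y b2x b2y px py qx qy s t : ℝ)
    (hs0 : 0 < s) (hs1 : s < 1) (ht0 : 0 < t) (ht1 : t < 1)
    (hpp : 0 < px^2 + py^2) (hqq : 0 < qx^2 + qy^2)
    (h12 : b1x^2 + b1y^2 = b2x^2 + b2y^2)
    (h13 : b1x^2 + b1y^2 = (b1x+px)^2 + (b1y+py)^2)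
    (h14 : b1x^2 + b1y^2 = (b2x+qx)^2 + (b2y+qy)^2)
    (ho : px*qx + py*qy = 0)
    (hcx : b1x + s*px = b2x + t*qx)
    (hcy : b1y + s*py = b2y + t*qy) :
    (2*b1x+2*b2x+px+qx)^2 + (2*b1y+2*b2y+py+qy)^2 < (px+qx)^2 + (py+qy)^2 ∧
    ((2*b1x+2*b2x+px+qx)/2 - b1x)*(b1x+b2x) + ((2*b1y+2*b2y+py+qy)/2 - b1y)*(b1y+b2y) < 0 ∧
    ((2*b1x+px)^2 + (2*b1y+py)^2) + ((2*b2x+qx)^2 + (2*b2y+qy)^2)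
      = (2*b1x+2*b2x+px+qx)^2 + (2*b1y+2*b2y+py+qy)^2 ∧
    ∀ θ : ℝ, (px+qx)*(θ*(b2y-b1y) - b2y) - (py+qy)*(θ*(b2x-b1x) - b2x) = 0 →
      0 ≤ θ ∧ θ ≤ 1 := by
  have F1 : px*b1x + py*b1y = -(px^2+py^2)/2 := by linear_combination (-1/2) * h13
  have F2 : qx*b2x + qy*b2y = -(qx^2+qy^2)/2 := by linear_combination (1/2)*h12 - (1/2)*h14
  have F3 : qx*b1x + qy*b1y = (t - 1/2)*(qx^2+qy^2) := by
    linear_combination qx*hcx + qy*hcy - s*ho + F2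
  have F4 : px*b2x + py*b2y = (s - 1/2)*(px^2+py^2) := by
    linear_combination -px*hcx - py*hcy - t*ho + F1
  have H_w2 : (px*qy - py*qx)^2 = (px^2+py^2)*(qx^2+qy^2) := by
    linear_combination -(px*qx+py*qy)*ho
  have H_Yp : (b1x+s*px)*px + (b1y+s*py)*py = (s - 1/2)*(px^2+py^2) := by
    linear_combination F1
  have H_Yq : (b1x+s*px)*qx + (b1y+s*py)*qy = (t - 1/2)*(qx^2+qy^2) := by
    linear_combination F3 + s*ho
  have H_YY1 : (b1x+s*px)^2 + (b1y+s*py)^2 = (b1x^2+b1y^2) + (s^2 - s)*(px^2+py^2) := by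
    linear_combination 2*s*F1
  have H_YY1' : (b1x+s*px)^2 + (b1y+s*py)^2 = (b2x^2+b2y^2) + (t^2 - t)*(qx^2+qy^2) := by
    linear_combination (b1x+s*px+b2x+t*qx)*hcx + (b1y+s*py+b2y+t*qy)*hcy + 2*t*F2
  have H_cross' : (px*qy - py*qx) * (px*(b1y+s*py) - py*(b1x+s*px))
      = (px^2+py^2) * ((t-1/2)*(qx^2+qy^2)) := by
    linear_combination (px^2+py^2)*H_Yq - ((b1x+s*px)*px + (b1y+s*py)*py)*ho
  have Hc2 : ((px^2+py^2)*(qx^2+qy^2)) * ((px*(b1y+s*py)-py*(b1x+s*px))^2)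
      = ((px^2+py^2)*(qx^2+qy^2)) * ((t-1/2)^2*((px^2+py^2)*(qx^2+qy^2))) := by
    linear_combination ((px*qy-py*qx)*(px*(b1y+s*py)-py*(b1x+s*px))
        + (px^2+py^2)*(t-1/2)*(qx^2+qy^2)) * H_cross'
      - (px*(b1y+s*py)-py*(b1x+s*px))^2 * H_w2
  have hppqq : (0:ℝ) < (px^2+py^2)*(qx^2+qy^2) := mul_pos hpp hqq
  have Hcrs2 : (px*(b1y+s*py)-py*(b1x+s*px))^2 = (t-1/2)^2*((px^2+py^2)*(qx^2+qy^2)) :=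
    mul_left_cancel₀ (ne_of_gt hppqq) Hc2
  have H_YYpp : ((b1x+s*px)^2+(b1y+s*py)^2)*(px^2+py^2)
      = ((s-1/2)^2*(px^2+py^2) + (t-1/2)^2*(qx^2+qy^2))*(px^2+py^2) := by
    linear_combination (((b1x+s*px)*px+(b1y+s*py)*py) + (s-1/2)*(px^2+py^2))*H_Yp + Hcrs2
  have H_YY2 : (b1x+s*px)^2+(b1y+s*py)^2
      = (s-1/2)^2*(px^2+py^2) + (t-1/2)^2*(qx^2+qy^2) :=
    mul_right_cancel₀ (ne_of_gt hpp) H_YYpp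
  have H_E : 4*(b1x^2+b1y^2) = (2*s-1)^2*(px^2+py^2) + (qx^2+qy^2) := by
    linear_combination 4*h12 + 4*H_YY2 - 4*H_YY1'
  have H_E2 : 4*(b1x^2+b1y^2) = (px^2+py^2) + (2*t-1)^2*(qx^2+qy^2) := by
    linear_combination 4*H_YY2 - 4*H_YY1
  have H_up : px*(2*b1x+px) + py*(2*b1y+py) = 0 := by linear_combination 2*F1
  have H_vq : qx*(2*b2x+qx) + qy*(2*b2y+qy) = 0 := by linear_combination 2*F2
  have H_wqu : (px*qy-py*qx) * (qx*(2*b1y+py) - qy*(2*b1x+px)) = 0 := by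
    linear_combination (qx*(2*b1x+px)+qy*(2*b1y+py))*ho - (qx^2+qy^2)*H_up
  have H_uvqqw : (((2*b1x+px)*(2*b2x+qx) + (2*b1y+py)*(2*b2y+qy)) * (qx^2+qy^2))
      * (px*qy-py*qx) = 0 := by
    linear_combination ((qx*(2*b1x+px)+qy*(2*b1y+py))*(px*qy-py*qx))*H_vq
      + (qx*(2*b2y+qy)-qy*(2*b2x+qx))*H_wqu
  have hw : (px*qy - py*qx) ≠ 0 := by
    intro h0
    exact (ne_of_gt hppqq) (by rw [← H_w2, h0]; ring)
  have H_uv : (2*b1x+px)*(2*b2x+qx) + (2*b1y+py)*(2*b2y+qy) = 0 := by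
    rcases mul_eq_zero.mp H_uvqqw with h' | h'
    · rcases mul_eq_zero.mp h' with h'' | h''
      · exact h''
      · exact absurd h'' (ne_of_gt hqq)
    · exact absurd h' hw
  have H_uu : (2*b1x+px)^2 + (2*b1y+py)^2 = 4*(b1x^2+b1y^2) - (px^2+py^2) := by
    linear_combination 4*F1
  have H_vv : (2*b2x+qx)^2 + (2*b2y+qy)^2 = 4*(b1x^2+b1y^2) - (qx^2+qy^2) := by
    linear_combination 4*F2 - 4*h12
  have hkey : ((px+qx)^2+(py+qy)^2)
      - ((2*b1x+2*b2x+px+qx)^2 + (2*b1y+2*b2y+py+qy)^2) = 8*s*(1-s)*(px^2+py^2) := by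
    linear_combination -H_uu - H_vv - 2*H_uv - 2*H_E + 2*ho
  have hpos : 0 < 8*s*(1-s)*(px^2+py^2) := by
    have h1 : 0 < 1 - s := by linarith
    have := mul_pos (mul_pos (by linarith : (0:ℝ) < 8*s) h1) hpp
    linarith [this]
  refine ⟨by linarith, ?_, by linear_combination -2*H_uv, ?_⟩
  · have hkey2 : 8*(((2*b1x+2*b2x+px+qx)/2 - b1x)*(b1x+b2x)
        + ((2*b1y+2*b2y+py+qy)/2 - b1y)*(b1y+b2y))
        = ((2*b1x+2*b2x+px+qx)^2 + (2*b1y+2*b2y+py+qy)^2) - ((px+qx)^2+(py+qy)^2) := by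
      linear_combination -4*h12
    linarith
  · intro θ hth
    have e1a : (px*qy-py*qx) * (px*b2y - py*b2x) = -((px^2+py^2)*(qx^2+qy^2))/2 := by
      linear_combination (px^2+py^2)*F2 - (px*b2x+py*b2y)*ho
    have e1b : (px*qy-py*qx) * (qx*b2y - qy*b2x)
        = -(s-1/2)*((px^2+py^2)*(qx^2+qy^2)) := by
      linear_combination (qx*b2x+qy*b2y)*ho - (qx^2+qy^2)*F4
    have e1 : (px*qy-py*qx) * ((px+qx)*b2y - (py+qy)*b2x)
        = -s*((px^2+py^2)*(qx^2+qy^2)) := by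
      linear_combination e1a + e1b
    have e2a : (px*qy-py*qx) * (px*b1y - py*b1x) = (t-1/2)*((px^2+py^2)*(qx^2+qy^2)) := by
      linear_combination (px^2+py^2)*F3 - (px*b1x+py*b1y)*ho
    have e2b : (px*qy-py*qx) * (qx*b1y - qy*b1x) = ((px^2+py^2)*(qx^2+qy^2))/2 := by
      linear_combination (qx*b1x+qy*b1y)*ho - (qx^2+qy^2)*F1
    have e2 : (px*qy-py*qx) * ((px+qx)*b1y - (py+qy)*b1x)
        = t*((px^2+py^2)*(qx^2+qy^2)) := by
      linear_combination e2a + e2b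
    have e3 : (θ*(s+t) - s) * ((px^2+py^2)*(qx^2+qy^2)) = 0 := by
      linear_combination (-(px*qy-py*qx))*hth + (θ - 1)*e1 - θ*e2
    have h4 : θ*(s+t) = s := by
      rcases mul_eq_zero.mp e3 with h' | h'
      · linarith
      · exact absurd h' (ne_of_gt hppqq)
    have hst : 0 < s + t := by linarith
    constructor
    · by_contra hc
      push_neg at hc
      have := mul_neg_of_neg_of_pos hc hst
      linarith
    · by_contra hc
      push_neg at hc
      have h5 := mul_lt_mul_of_pos_right hc hst
      rw [one_mul] at h5
      linarith

lemma tangency (f₁ f₂ P Q : ℂ) (a : ℝ)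
    (hPQ : P ≠ Q)
    (hrad : dist f₁ P = dist f₁ Q)
    (hne : P + Q - f₁ ≠ f₁)
    (h2a : dist (P + Q - f₁) f₂ = 2 * a)
    (hside : (f₂-P).re * ((P-f₁)+(Q-f₁)).re + (f₂-P).im * ((P-f₁)+(Q-f₁)).im < 0) :
    ∃ ζ, ζ ∈ segment ℝ (P + Q - f₁) f₂ ∧
      EllipseSet f₁ f₂ a ∩ LineThrough P Q = {ζ} := by
  set f' := P + Q - f₁ with hf'
  set n := (P-f₁)+(Q-f₁) with hn
  set S : ℝ := (f₂-P).re * n.re + (f₂-P).im * n.im with hS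
  have hnn : 0 < n.re^2 + n.im^2 := by
    have h0 := sub_ne_zero_sq hne
    have heq : (f' - f₁).re^2 + (f' - f₁).im^2 = n.re^2 + n.im^2 := by
      simp only [hf', hn, Complex.sub_re, Complex.sub_im, Complex.add_re, Complex.add_im]
      ring
    rw [heq] at h0; exact h0
  have hrad2 := sq_of_dist_eq hrad
  have hQn : (Q-P).re*n.re + (Q-P).im*n.im = 0 := by
    simp only [hn, Complex.sub_re, Complex.sub_im, Complex.add_re, Complex.add_im] at hrad2 ⊢
    linear_combination -hrad2
  -- value of the affine functional on the line
  have hline_g : ∀ z ∈ LineThrough P Q, (z-P).re*n.re + (z-P).im*n.im = 0 := by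
    rintro z ⟨θ, rfl⟩
    simp only [add_sub_cancel_left, Complex.smul_re, Complex.smul_im, smul_eq_mul,
      Complex.sub_re, Complex.sub_im] at hQn ⊢
    linear_combination θ * hQn
  have hgf' : (f'-P).re*n.re + (f'-P).im*n.im = (n.re^2 + n.im^2)/2 := by
    simp only [hf', hn, Complex.sub_re, Complex.sub_im, Complex.add_re, Complex.add_im] at hrad2 ⊢
    linear_combination (-1/2) * hrad2
  have hden : 0 < (n.re^2 + n.im^2)/2 - S := by
    have : S < 0 := hside
    linarith
  set lam : ℝ := ((n.re^2+n.im^2)/2) / ((n.re^2+n.im^2)/2 - S) with hlam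
  set ζ : ℂ := f' + lam • (f₂ - f') with hζ
  have hlam0 : 0 ≤ lam := div_nonneg (by linarith) (le_of_lt hden)
  have hlam1 : lam ≤ 1 := by
    rw [hlam, div_le_one hden]
    have : S < 0 := hside
    linarith
  have hlamEq : lam * ((n.re^2+n.im^2)/2 - S) = (n.re^2+n.im^2)/2 := by
    rw [hlam]; exact div_mul_cancel₀ _ (ne_of_gt hden)
  have hζseg : ζ ∈ segment ℝ f' f₂ := mem_segment_param.mpr ⟨lam, hlam0, hlam1, rfl⟩
  -- ζ is on the line
  have hgζ : (ζ-P).re*n.re + (ζ-P).im*n.im = 0 := by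
    have hexp : (ζ-P).re*n.re + (ζ-P).im*n.im
        = ((f'-P).re*n.re + (f'-P).im*n.im) + lam * (S - ((f'-P).re*n.re + (f'-P).im*n.im)) := by
      simp only [hζ, hS, Complex.add_re, Complex.add_im, Complex.smul_re, Complex.smul_im,
        smul_eq_mul, Complex.sub_re, Complex.sub_im]
      ring
    rw [hexp, hgf']
    linarith [hlamEq]
  have hcrs2 : ((Q-P).re*n.im - (Q-P).im*n.re)^2
      = ((Q-P).re^2+(Q-P).im^2)*(n.re^2+n.im^2) := by
    linear_combination -((Q-P).re*n.re + (Q-P).im*n.im)*hQn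
  have hdd : 0 < (Q-P).re^2+(Q-P).im^2 := sub_ne_zero_sq (fun h => hPQ h.symm)
  have hcrsd : (Q-P).re*n.im - (Q-P).im*n.re ≠ 0 := by
    intro h0
    have : (0:ℝ) < ((Q-P).re*n.im - (Q-P).im*n.re)^2 := by
      rw [hcrs2]; exact mul_pos hdd hnn
    rw [h0] at this; simp at this
  have hζL : ζ ∈ LineThrough P Q := by
    rw [mem_line_iff hPQ]
    have hprod : ((Q-P).re * (ζ-P).im - (Q-P).im * (ζ-P).re)
        * ((Q-P).re*n.im - (Q-P).im*n.re) = 0 := by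
      linear_combination ((Q-P).re^2+(Q-P).im^2) * hgζ
        - ((ζ-P).re*(Q-P).re + (ζ-P).im*(Q-P).im) * hQn
    rcases mul_eq_zero.mp hprod with h' | h'
    · exact h'
    · exact absurd h' hcrsd
  -- membership characterization on the line
  have claimA : ∀ z ∈ LineThrough P Q,
      (z ∈ EllipseSet f₁ f₂ a ↔ z ∈ segment ℝ f' f₂) := by
    intro z hz
    have hrefl := line_reflect hrad hz
    constructor
    · intro hE
      have : dist f' z + dist z f₂ = dist f' f₂ := by
        rw [dist_comm f' z, ← hrefl, h2a]
        exact hE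
      exact (mem_segment_iff_wbtw).mpr ((dist_add_dist_eq_iff).mp this)
    · intro hseg
      have : dist f' z + dist z f₂ = dist f' f₂ :=
        (dist_add_dist_eq_iff).mpr ((mem_segment_iff_wbtw).mp hseg)
      show dist z f₁ + dist z f₂ = 2*a
      rw [hrefl, ← h2a]
      rw [dist_comm f' z] at this
      exact this
  refine ⟨ζ, hζseg, ?_⟩
  ext z
  simp only [Set.mem_inter_iff, Set.mem_singleton_iff]
  constructor
  · rintro ⟨hzE, hzL⟩
    have hzseg : z ∈ segment ℝ f' f₂ := (claimA z hzL).mp hzE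
    obtain ⟨μ, hμ0, hμ1, hzeq⟩ := mem_segment_param.mp hzseg
    have hgz := hline_g z hzL
    have hexp : (z-P).re*n.re + (z-P).im*n.im
        = ((f'-P).re*n.re + (f'-P).im*n.im) + μ * (S - ((f'-P).re*n.re + (f'-P).im*n.im)) := by
      rw [hzeq]
      simp only [hS, Complex.add_re, Complex.add_im, Complex.smul_re, Complex.smul_im,
        smul_eq_mul, Complex.sub_re, Complex.sub_im]
      ring
    rw [hgz] at hexp
    rw [hgf'] at hexp
    have hμeq : μ * ((n.re^2+n.im^2)/2 - S) = (n.re^2+n.im^2)/2 := by linarith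
    have hμlam : μ = lam := by
      have := hlamEq
      have hh : (μ - lam) * ((n.re^2+n.im^2)/2 - S) = 0 := by linarith [hμeq, hlamEq]
      rcases mul_eq_zero.mp hh with h' | h'
      · linarith
      · exact absurd h' (ne_of_gt hden)
    rw [hzeq, hμlam, ← hζ]
  · rintro rfl
    exact ⟨(claimA ζ hζL).mpr hζseg, hζL⟩

lemma conv_tangency (O f₂ P Q : ℂ) (a : ℝ) (ζ : ℂ)
    (hPQ : P ≠ Q)
    (hrad : dist O P = dist O Q)
    (hlt : dist O f₂ < 2*a)
    (htan : EllipseSet O f₂ a ∩ LineThrough P Q = {ζ}) :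
    dist (P + Q - O) f₂ = 2*a := by
  set O' := P + Q - O with hO'
  have hrefl : ∀ z ∈ LineThrough P Q, dist z O = dist z O' := fun z hz => line_reflect hrad hz
  have hζmem : ζ ∈ EllipseSet O f₂ a ∩ LineThrough P Q := by rw [htan]; rfl
  obtain ⟨hζE, hζL⟩ := hζmem
  have hζsum : dist ζ O + dist ζ f₂ = 2*a := hζE
  have hle : dist O' f₂ ≤ 2*a := by
    calc dist O' f₂ ≤ dist O' ζ + dist ζ f₂ := dist_triangle O' ζ f₂
    _ = dist ζ O' + dist ζ f₂ := by rw [dist_comm]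
    _ = dist ζ O + dist ζ f₂ := by rw [hrefl ζ hζL]
    _ = 2*a := hζsum
  rcases eq_or_lt_of_le hle with heq | hlt'
  · exact heq
  exfalso
  -- find w on the line with dist w O + dist w f₂ < 2a
  have hwex : ∃ w ∈ LineThrough P Q, dist w O + dist w f₂ < 2*a := by
    set n : ℂ := Complex.I * (Q - P) with hn
    set c : ℝ := P.re*n.re + P.im*n.im with hc
    -- the line is the level set {g = c}
    have hlev : ∀ z : ℂ, z.re*n.re + z.im*n.im = c → z ∈ LineThrough P Q := by
      intro z hz
      rw [mem_line_iff hPQ]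
      have : n.re = -(Q-P).im ∧ n.im = (Q-P).re := by
        constructor <;> simp [hn, Complex.mul_re, Complex.mul_im]
      obtain ⟨h1, h2⟩ := this
      rw [hc, h1, h2] at hz
      simp only [Complex.sub_re, Complex.sub_im] at hz ⊢
      linear_combination hz
    have hlev' : ∀ z ∈ LineThrough P Q, z.re*n.re + z.im*n.im = c := by
      rintro z ⟨θ, rfl⟩
      have : n.re = -(Q-P).im ∧ n.im = (Q-P).re := by
        constructor <;> simp [hn, Complex.mul_re, Complex.mul_im]
      obtain ⟨h1, h2⟩ := this
      rw [hc, h1, h2]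
      simp only [Complex.add_re, Complex.add_im, Complex.smul_re, Complex.smul_im,
        smul_eq_mul, Complex.sub_re, Complex.sub_im]
      ring
    have hO'g : O'.re*n.re + O'.im*n.im = 2*c - (O.re*n.re + O.im*n.im) := by
      have h1 := hlev' P ⟨0, by simp⟩
      have h2 := hlev' Q ⟨1, by simp [one_smul]⟩
      rw [hO']
      simp only [Complex.add_re, Complex.add_im, Complex.sub_re, Complex.sub_im]
      linear_combination h1 + h2
    rcases le_total (O.re*n.re + O.im*n.im) c with hO1 | hO1
    · rcases le_total c (f₂.re*n.re + f₂.im*n.im) with hF1 | hF1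
      · -- O and f₂ on opposite (weak) sides: segment O f₂ crosses
        obtain ⟨w, hwseg, hwg⟩ := seg_cross (n := n) (x := O) (y := f₂) hO1 hF1
        refine ⟨w, hlev w hwg, ?_⟩
        have : dist O w + dist w f₂ = dist O f₂ :=
          (dist_add_dist_eq_iff).mpr ((mem_segment_iff_wbtw).mp hwseg)
        rw [dist_comm O w] at this
        linarith
      · -- f₂ on same side as O; O' is on the other side
        have hO'1 : c ≤ O'.re*n.re + O'.im*n.im := by rw [hO'g]; linarith
        obtain ⟨w, hwseg, hwg⟩ := seg_cross (n := n) (x := f₂) (y := O') hF1 hO'1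
        have hwL := hlev w hwg
        refine ⟨w, hwL, ?_⟩
        have : dist f₂ w + dist w O' = dist f₂ O' :=
          (dist_add_dist_eq_iff).mpr ((mem_segment_iff_wbtw).mp hwseg)
        have hw' : dist w O = dist w O' := hrefl w hwL
        rw [dist_comm f₂ w, dist_comm f₂ O'] at this
        linarith
    · rcases le_total (f₂.re*n.re + f₂.im*n.im) c with hF1 | hF1
      · obtain ⟨w, hwseg, hwg⟩ := seg_cross (n := n) (x := f₂) (y := O) hF1 hO1
        refine ⟨w, hlev w hwg, ?_⟩
        have : dist f₂ w + dist w O = dist f₂ O :=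
          (dist_add_dist_eq_iff).mpr ((mem_segment_iff_wbtw).mp hwseg)
        rw [dist_comm f₂ w, dist_comm f₂ O] at this
        linarith
      · have hO'1 : O'.re*n.re + O'.im*n.im ≤ c := by rw [hO'g]; linarith
        obtain ⟨w, hwseg, hwg⟩ := seg_cross (n := n) (x := O') (y := f₂) hO'1 hF1
        have hwL := hlev w hwg
        refine ⟨w, hwL, ?_⟩
        have : dist O' w + dist w f₂ = dist O' f₂ :=
          (dist_add_dist_eq_iff).mpr ((mem_segment_iff_wbtw).mp hwseg)
        have hw' : dist w O = dist w O' := hrefl w hwL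
        rw [dist_comm O' w] at this
        linarith
  obtain ⟨w, hwL, hwlt⟩ := hwex
  obtain ⟨θ₀, hw⟩ := hwL
  set d := Q - P with hd
  have hdabs : 0 < ‖d‖ := by
    rw [hd]
    simpa [norm_pos_iff, sub_eq_zero] using (fun h => hPQ h.symm)
  obtain ⟨Dq, hDq⟩ : ∃ q : ℝ, q = (2*a + dist P O)/(‖d‖) := ⟨_, rfl⟩
  have hDq0 : 0 ≤ Dq := by
    rw [hDq]
    apply div_nonneg _ (le_of_lt hdabs)
    linarith [hlt, dist_nonneg (x := O) (y := f₂), dist_nonneg (x := P) (y := O)]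
  set φ : ℝ → ℝ := fun θ => dist (P + θ • d) O + dist (P + θ • d) f₂ with hφ
  have hφcont : Continuous φ := by fun_prop
  have hφw : φ θ₀ < 2*a := by rw [hφ]; simp only [← hd, ← hw]; exact hwlt
  have hφbig : ∀ θ : ℝ, |θ| ≥ Dq → 2*a ≤ φ θ := by
    intro θ hθ
    have h1 : dist (P + θ • d) O ≥ dist (P + θ • d) P - dist O P := by
      have := dist_triangle (P + θ • d) O P
      linarith [this]
    have h3 : dist (P + θ • d) P = |θ| * ‖d‖ := by
      rw [Complex.dist_eq]
      have : P + θ • d - P = θ • d := by ring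
      rw [this]
      rw [norm_smul, Real.norm_eq_abs]
    have h4 : (2*a + dist P O) ≤ |θ| * ‖d‖ := by
      rw [hDq, ge_iff_le, div_le_iff₀ hdabs] at hθ
      linarith
    have h5 : 0 ≤ dist (P + θ • d) f₂ := dist_nonneg
    rw [hφ]
    simp only
    rw [h3] at h1
    linarith [dist_comm P O]
  obtain ⟨T, hT⟩ : ∃ T : ℝ, T = |θ₀| + Dq + 1 := ⟨_, rfl⟩
  have hTnn : 0 ≤ T := by rw [hT]; linarith [abs_nonneg θ₀]
  have hT1 : θ₀ ≤ T := by rw [hT]; linarith [le_abs_self θ₀]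
  have hT2 : -T ≤ θ₀ := by rw [hT]; linarith [neg_abs_le θ₀]
  have hφT : 2*a ≤ φ T := by
    apply hφbig
    rw [abs_of_nonneg hTnn, hT]
    linarith [abs_nonneg θ₀]
  have hφT' : 2*a ≤ φ (-T) := by
    apply hφbig
    rw [abs_neg, abs_of_nonneg hTnn, hT]
    linarith [abs_nonneg θ₀]
  obtain ⟨θ₁, hθ₁mem, hθ₁⟩ := intermediate_value_Icc hT1 hφcont.continuousOn ⟨le_of_lt hφw, hφT⟩
  obtain ⟨θ₂, hθ₂mem, hθ₂⟩ := intermediate_value_Icc' hT2 hφcont.continuousOn ⟨le_of_lt hφw, hφT'⟩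
  have hz₁ : P + θ₁ • d ∈ EllipseSet O f₂ a ∩ LineThrough P Q :=
    ⟨hθ₁, ⟨θ₁, rfl⟩⟩
  have hz₂ : P + θ₂ • d ∈ EllipseSet O f₂ a ∩ LineThrough P Q :=
    ⟨hθ₂, ⟨θ₂, rfl⟩⟩
  rw [htan] at hz₁ hz₂
  have heq12 : P + θ₁ • d = P + θ₂ • d := by
    rw [Set.mem_singleton_iff] at hz₁ hz₂
    rw [hz₁, hz₂]
  have hθeq : θ₁ = θ₂ := by
    have h0 : (θ₁ - θ₂) • d = 0 := by
      rw [sub_smul, add_left_cancel heq12, sub_self]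
    have hd0 : d ≠ 0 := by
      rw [hd, sub_ne_zero]
      exact fun h => hPQ h.symm
    rcases smul_eq_zero.mp h0 with h' | h'
    · linarith [sub_eq_zero.mp h']
    · exact absurd h' hd0
  have hθ₁0 : θ₀ ≤ θ₁ := hθ₁mem.1
  have hθ₂0 : θ₂ ≤ θ₀ := hθ₂mem.2
  have : θ₁ = θ₀ := le_antisymm (by linarith [hθeq]) hθ₁0
  rw [this] at hθ₁
  linarith [hφw, hθ₁]

lemma side_core (O A B C D : ℂ) (s t aa : ℝ)
    (hs0 : 0 < s) (hs1 : s < 1) (ht0 : 0 < t) (ht1 : t < 1)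
    (hd1 : dist O A = dist O B) (hd2 : dist O B = dist O C) (hd3 : dist O C = dist O D)
    (hAC : A ≠ C) (hBD : B ≠ D)
    (hX : A + s • (C - A) = B + t • (D - B))
    (horth : (C-A).re * (D-B).re + (C-A).im * (D-B).im = 0)
    (habs : ‖(C-A) + (D-B)‖ = 4*aa) :
    dist (A + B - O) ((1/2 : ℝ) • (A+B+C+D) - O) = 2*aa ∧
    (((1/2 : ℝ) • (A+B+C+D) - O - A).re * ((A-O)+(B-O)).re
      + ((1/2 : ℝ) • (A+B+C+D) - O - A).im * ((A-O)+(B-O)).im < 0) ∧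
    dist O ((1/2 : ℝ) • (A+B+C+D) - O) < 2*aa ∧
    (((1/2 : ℝ) • (A+B+C+D) - O = O) → A + C = B + D) ∧
    ∀ ζ, ζ ∈ LineThrough A B →
      ζ ∈ segment ℝ (A + B - O) ((1/2 : ℝ) • (A+B+C+D) - O) →
      ζ ∈ segment ℝ A B := by
  have e12 := sq_of_dist_eq hd1
  have e13 := sq_of_dist_eq (hd1.trans hd2)
  have e14 := sq_of_dist_eq ((hd1.trans hd2).trans hd3)
  have hXre := congrArg Complex.re hX
  have hXim := congrArg Complex.im hX
  have hppC := sub_ne_zero_sq (Ne.symm hAC)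
  have hqqC := sub_ne_zero_sq (Ne.symm hBD)
  simp only [Complex.add_re, Complex.add_im, Complex.sub_re, Complex.sub_im,
    Complex.smul_re, Complex.smul_im, smul_eq_mul] at e12 e13 e14 hXre hXim horth hppC hqqC
  have h12 : (A.re-O.re)^2 + (A.im-O.im)^2 = (B.re-O.re)^2 + (B.im-O.im)^2 := by
    linear_combination e12
  have h13 : (A.re-O.re)^2 + (A.im-O.im)^2
      = ((A.re-O.re)+(C.re-A.re))^2 + ((A.im-O.im)+(C.im-A.im))^2 := by
    linear_combination e13
  have h14 : (A.re-O.re)^2 + (A.im-O.im)^2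
      = ((B.re-O.re)+(D.re-B.re))^2 + ((B.im-O.im)+(D.im-B.im))^2 := by
    linear_combination e14
  have ho : (C.re-A.re)*(D.re-B.re) + (C.im-A.im)*(D.im-B.im) = 0 := by
    linear_combination horth
  have hcx : (A.re-O.re) + s*(C.re-A.re) = (B.re-O.re) + t*(D.re-B.re) := by
    linear_combination hXre
  have hcy : (A.im-O.im) + s*(C.im-A.im) = (B.im-O.im) + t*(D.im-B.im) := by
    linear_combination hXim
  have hpp : 0 < (C.re-A.re)^2 + (C.im-A.im)^2 := by linarith only [hppC]
  have hqq : 0 < (D.re-B.re)^2 + (D.im-B.im)^2 := by linarith only [hqqC]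
  obtain ⟨K1, K2, K3, K4⟩ := core (A.re-O.re) (A.im-O.im) (B.re-O.re) (B.im-O.im)
    (C.re-A.re) (C.im-A.im) (D.re-B.re) (D.im-B.im) s t
    hs0 hs1 ht0 ht1 hpp hqq h12 h13 h14 ho hcx hcy
  have habs2 : ((C.re-A.re)+(D.re-B.re))^2 + ((C.im-A.im)+(D.im-B.im))^2 = (4*aa)^2 := by
    have h2 : ‖(C-A) + (D-B)‖ ^ 2 = (4*aa)^2 := by rw [habs]
    rw [Complex.sq_norm, Complex.normSq_apply] at h2
    simp only [Complex.add_re, Complex.add_im, Complex.sub_re, Complex.sub_im] at h2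
    linear_combination h2
  have haa : 0 ≤ aa := by
    have h9 := norm_nonneg ((C-A) + (D-B))
    rw [habs] at h9
    linarith only [h9]
  refine ⟨?_, ?_, ?_, ?_, ?_⟩
  · apply dist_eq_of_sq' (by linarith : (0:ℝ) ≤ 2*aa)
    simp only [Complex.add_re, Complex.add_im, Complex.sub_re, Complex.sub_im,
      Complex.smul_re, Complex.smul_im, smul_eq_mul]
    linear_combination (1/4) * habs2
  · simp only [Complex.add_re, Complex.add_im, Complex.sub_re, Complex.sub_im,
      Complex.smul_re, Complex.smul_im, smul_eq_mul]
    linarith only [K2]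
  · have hlt4 : (2*(A.re-O.re)+2*(B.re-O.re)+(C.re-A.re)+(D.re-B.re))^2
        + (2*(A.im-O.im)+2*(B.im-O.im)+(C.im-A.im)+(D.im-B.im))^2 < (4*aa)^2 := by
      linarith only [K1, habs2]
    have hsq : (O - ((1/2 : ℝ) • (A+B+C+D) - O)).re^2
        + (O - ((1/2 : ℝ) • (A+B+C+D) - O)).im^2 < (2*aa)^2 := by
      simp only [Complex.add_re, Complex.add_im, Complex.sub_re, Complex.sub_im,
        Complex.smul_re, Complex.smul_im, smul_eq_mul]
      linarith only [hlt4]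
    have hd := dist_sq_complex O ((1/2 : ℝ) • (A+B+C+D) - O)
    nlinarith only [dist_nonneg (x := O) (y := (1/2 : ℝ) • (A+B+C+D) - O), haa, hd, hsq]
  · intro h
    have hre := congrArg Complex.re h
    have him := congrArg Complex.im h
    simp only [Complex.add_re, Complex.add_im, Complex.sub_re, Complex.sub_im,
      Complex.smul_re, Complex.smul_im, smul_eq_mul] at hre him
    have hz : (2*(A.re-O.re)+2*(B.re-O.re)+(C.re-A.re)+(D.re-B.re))^2
        + (2*(A.im-O.im)+2*(B.im-O.im)+(C.im-A.im)+(D.im-B.im))^2 = 0 := by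
      have hzx : 2*(A.re-O.re)+2*(B.re-O.re)+(C.re-A.re)+(D.re-B.re) = 0 := by
        linarith only [hre]
      have hzy : 2*(A.im-O.im)+2*(B.im-O.im)+(C.im-A.im)+(D.im-B.im) = 0 := by
        linarith only [him]
      rw [hzx, hzy]; ring
    rw [hz] at K3
    have hu1s : (2*(A.re-O.re)+(C.re-A.re))^2 = 0 := by
      linarith only [K3, sq_nonneg (2*(A.im-O.im)+(C.im-A.im)),
        sq_nonneg (2*(B.re-O.re)+(D.re-B.re)), sq_nonneg (2*(B.im-O.im)+(D.im-B.im)),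
        sq_nonneg (2*(A.re-O.re)+(C.re-A.re))]
    have hu2s : (2*(A.im-O.im)+(C.im-A.im))^2 = 0 := by
      linarith only [K3, sq_nonneg (2*(A.re-O.re)+(C.re-A.re)),
        sq_nonneg (2*(B.re-O.re)+(D.re-B.re)), sq_nonneg (2*(B.im-O.im)+(D.im-B.im)),
        sq_nonneg (2*(A.im-O.im)+(C.im-A.im))]
    have hv1s : (2*(B.re-O.re)+(D.re-B.re))^2 = 0 := by
      linarith only [K3, sq_nonneg (2*(A.re-O.re)+(C.re-A.re)),
        sq_nonneg (2*(A.im-O.im)+(C.im-A.im)), sq_nonneg (2*(B.im-O.im)+(D.im-B.im)),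
        sq_nonneg (2*(B.re-O.re)+(D.re-B.re))]
    have hv2s : (2*(B.im-O.im)+(D.im-B.im))^2 = 0 := by
      linarith only [K3, sq_nonneg (2*(A.re-O.re)+(C.re-A.re)),
        sq_nonneg (2*(A.im-O.im)+(C.im-A.im)), sq_nonneg (2*(B.re-O.re)+(D.re-B.re)),
        sq_nonneg (2*(B.im-O.im)+(D.im-B.im))]
    have hu1 := (pow_eq_zero_iff two_ne_zero).mp hu1s
    have hu2 := (pow_eq_zero_iff two_ne_zero).mp hu2s
    have hv1 := (pow_eq_zero_iff two_ne_zero).mp hv1s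
    have hv2 := (pow_eq_zero_iff two_ne_zero).mp hv2s
    apply Complex.ext
    · simp only [Complex.add_re]; linarith only [hu1, hv1]
    · simp only [Complex.add_im]; linarith only [hu2, hv2]
  · intro ζ hL hseg
    obtain ⟨θ, hζθ⟩ := hL
    obtain ⟨lam, _, _, hzl⟩ := mem_segment_param.mp hseg
    have hcol : (((1/2 : ℝ) • (A+B+C+D) - O) - (A+B-O)).re * (ζ - (A+B-O)).im
        - (((1/2 : ℝ) • (A+B+C+D) - O) - (A+B-O)).im * (ζ - (A+B-O)).re = 0 := by
      rw [hzl]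
      simp only [Complex.add_re, Complex.add_im, Complex.sub_re, Complex.sub_im,
        Complex.smul_re, Complex.smul_im, smul_eq_mul]
      ring
    rw [hζθ] at hcol
    simp only [Complex.add_re, Complex.add_im, Complex.sub_re, Complex.sub_im,
      Complex.smul_re, Complex.smul_im, smul_eq_mul] at hcol
    have hth : ((C.re-A.re)+(D.re-B.re))*(θ*((B.im-O.im)-(A.im-O.im)) - (B.im-O.im))
        - ((C.im-A.im)+(D.im-B.im))*(θ*((B.re-O.re)-(A.re-O.re)) - (B.re-O.re)) = 0 := by
      linear_combination 2 * hcol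
    obtain ⟨h0, h1⟩ := K4 θ hth
    exact mem_segment_param.mpr ⟨θ, h0, h1, hζθ⟩

lemma pair_subset₁ (x y z : ℂ) : ({x, y} : Set ℂ) ⊆ ({x, y, z} : Set ℂ) := by
  intro w hw; simp at hw ⊢; tauto

lemma seg_sub_hull (x y z : ℂ) : segment ℝ x y ⊆ convexHull ℝ ({x, y, z} : Set ℂ) := by
  rw [← convexHull_pair]
  exact convexHull_mono (pair_subset₁ x y z)

lemma not_para (A B C D X : ℂ) (s t : ℝ)
    (hX1 : X = A + s • (C - A)) (hX2 : X = B + t • (D - B))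
    (hAC : A ≠ C) (hBD : B ≠ D)
    (h1 : A ∉ convexHull ℝ ({B, C, D} : Set ℂ))
    (h2 : B ∉ convexHull ℝ ({A, C, D} : Set ℂ))
    (h3 : C ∉ convexHull ℝ ({A, B, D} : Set ℂ)) :
    (C-A).re * (D-B).im - (C-A).im * (D-B).re ≠ 0 := by
  intro h0
  have hpp : 0 < (C-A).re^2 + (C-A).im^2 := sub_ne_zero_sq (Ne.symm hAC)
  set κ : ℝ := ((D-B).re*(C-A).re + (D-B).im*(C-A).im)/((C-A).re^2+(C-A).im^2) with hκ
  have hq : D - B = κ • (C - A) := by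
    apply Complex.ext
    · rw [Complex.smul_re, smul_eq_mul, hκ, div_mul_eq_mul_div, eq_div_iff (ne_of_gt hpp)]
      linear_combination (-(C-A).im) * h0
    · rw [Complex.smul_im, smul_eq_mul, hκ, div_mul_eq_mul_div, eq_div_iff (ne_of_gt hpp)]
      linear_combination ((C-A).re) * h0
  have hB : B = A + (s - t*κ) • (C - A) := by
    have h := hX1.symm.trans hX2
    rw [hq] at h
    simp only [Complex.real_smul] at h ⊢
    push_cast
    linear_combination -h
  set e : ℝ := s - t*κ with he
  rcases le_or_gt 0 e with he0 | he0
  · rcases le_or_gt e 1 with he1 | he1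
    · -- B on segment A C
      exact h2 (seg_sub_hull A C D (mem_segment_param.mpr ⟨e, he0, he1, hB⟩))
    · -- e > 1 : C on segment A B
      apply h3
      apply seg_sub_hull A B D
      have hee : (e:ℝ) ≠ 0 := by linarith
      have hee0 : (0:ℝ) < e := by linarith
      refine ⟨(e-1)/e, 1/e, div_nonneg (by linarith) (by linarith),
        div_nonneg (by linarith) (by linarith), by field_simp; ring, ?_⟩
      rw [hB]
      simp only [Complex.real_smul]
      push_cast
      have heC : (e:ℂ) ≠ 0 := by exact_mod_cast hee
      field_simp
      ring
  · -- e < 0 : A on segment B C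
    apply h1
    apply seg_sub_hull B C D
    have h1e : (1 - e : ℝ) ≠ 0 := by linarith
    refine ⟨1/(1-e), -e/(1-e), div_nonneg (by linarith) (by linarith),
      div_nonneg (by linarith) (by linarith), by field_simp; ring, ?_⟩
    rw [hB]
    simp only [Complex.real_smul]
    push_cast
    have heC : (1:ℂ) - e ≠ 0 := by
      intro hh
      apply h1e
      have := congrArg Complex.re hh
      simpa using this
    field_simp
    ring

lemma conv_ortho (A B C D O f₂ : ℂ)
    (hw : (C-A).re * (D-B).im - (C-A).im * (D-B).re ≠ 0)
    (t1 : dist (A+B-O) f₂ = dist (B+C-O) f₂)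
    (t2 : dist (B+C-O) f₂ = dist (C+D-O) f₂)
    (t3 : dist (C+D-O) f₂ = dist (D+A-O) f₂) :
    (C-A).re * (D-B).re + (C-A).im * (D-B).im = 0 := by
  have n13 := sq_of_dist_eq (t1.trans t2)
  have n24 := sq_of_dist_eq (t2.trans t3)
  have n12 := sq_of_dist_eq t1
  simp only [Complex.add_re, Complex.add_im, Complex.sub_re, Complex.sub_im] at n13 n24 n12 hw ⊢
  obtain ⟨Wx, hWxd⟩ : ∃ w : ℝ, w = 2*f₂.re + 2*O.re - (A.re+B.re+C.re+D.re) := ⟨_, rfl⟩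
  obtain ⟨Wy, hWyd⟩ : ∃ w : ℝ, w = 2*f₂.im + 2*O.im - (A.im+B.im+C.im+D.im) := ⟨_, rfl⟩
  have K1 : ((C.re-A.re)+(D.re-B.re))*Wx + ((C.im-A.im)+(D.im-B.im))*Wy = 0 := by
    rw [hWxd, hWyd]; linear_combination n13
  have K2 : ((C.re-A.re)-(D.re-B.re))*Wx + ((C.im-A.im)-(D.im-B.im))*Wy = 0 := by
    rw [hWxd, hWyd]; linear_combination -n24
  have Kp : (C.re-A.re)*Wx + (C.im-A.im)*Wy = 0 := by linear_combination (1/2)*K1 + (1/2)*K2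
  have Kq : (D.re-B.re)*Wx + (D.im-B.im)*Wy = 0 := by linear_combination (1/2)*K1 - (1/2)*K2
  have hWW : ((C.re-A.re)*(D.im-B.im) - (C.im-A.im)*(D.re-B.re))*(Wx^2+Wy^2) = 0 := by
    linear_combination ((D.im-B.im)*Wx - (D.re-B.re)*Wy)*Kp
      + ((C.re-A.re)*Wy - (C.im-A.im)*Wx)*Kq
  have hW2 : Wx^2 + Wy^2 = 0 := by
    rcases mul_eq_zero.mp hWW with h' | h'
    · exact absurd h' hw
    · exact h'
  have hWx : Wx = 0 := (pow_eq_zero_iff two_ne_zero).mp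
    (by linarith only [hW2, sq_nonneg Wx, sq_nonneg Wy] : Wx^2 = 0)
  have hWy : Wy = 0 := (pow_eq_zero_iff two_ne_zero).mp
    (by linarith only [hW2, sq_nonneg Wx, sq_nonneg Wy] : Wy^2 = 0)
  rw [hWxd] at hWx
  rw [hWyd] at hWy
  linear_combination n12 - (C.re-A.re)*hWx - (C.im-A.im)*hWy

lemma seg_sub_hull₂ (x y z : ℂ) : segment ℝ x z ⊆ convexHull ℝ ({x, y, z} : Set ℂ) := by
  rw [← convexHull_pair]
  apply convexHull_mono
  intro w hw; simp at hw ⊢; tauto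

lemma seg_sub_hull₃ (x y z : ℂ) : segment ℝ y z ⊆ convexHull ℝ ({x, y, z} : Set ℂ) := by
  rw [← convexHull_pair]
  apply convexHull_mono
  intro w hw; simp at hw ⊢; tauto

lemma abs_perp_sub (u v : ℂ) (h : u.re*v.re + u.im*v.im = 0) :
    ‖v - u‖ = ‖u + v‖ := by
  rw [Complex.norm_def, Complex.norm_def]
  congr 1
  rw [Complex.normSq_apply, Complex.normSq_apply]
  simp only [Complex.sub_re, Complex.sub_im, Complex.add_re, Complex.add_im]
  linear_combination -4*h

lemma abs_neg' (z : ℂ) : ‖-z‖ = ‖z‖ := by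
  rw [Complex.norm_def, Complex.norm_def]
  congr 1
  rw [Complex.normSq_apply, Complex.normSq_apply]
  simp only [Complex.neg_re, Complex.neg_im]
  ring

lemma ellipse_comm (u v : ℂ) (a : ℝ) : EllipseSet u v a = EllipseSet v u a := by
  unfold EllipseSet
  ext z
  simp only [Set.mem_setOf_eq]
  rw [add_comm]


end BsntAux

/-- A cyclic convex quadrilateral that is not a parallelogram is a
Besant quadrilateral (has an inscribed non-circular ellipse with one focus at the
circumcenter `EP`) if and only if it is orthodiagonal. -/
theorem besant_iff_orthodiagonal
    (A₁ A₂ A₃ A₄ EP : ℂ)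
    (hconv : IsConvexQuad A₁ A₂ A₃ A₄)
    (hEP : IsCircCenter EP A₁ A₂ A₃ A₄)
    (hnp : ¬ IsParallelogram A₁ A₂ A₃ A₄) :
    (∃ (E : Set ℂ) (f₁ f₂ : ℂ) (a : ℝ), IsEllipse E f₁ f₂ a ∧ f₁ ≠ f₂ ∧
        InscribedInQuad E A₁ A₂ A₃ A₄ ∧ (f₁ = EP ∨ f₂ = EP)) ↔
      Orthodiagonal A₁ A₂ A₃ A₄ := by
  obtain ⟨h1c, h2c, h3c, h4c, hXne⟩ := hconv
  obtain ⟨X, hX13, hX24⟩ := hXne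
  obtain ⟨hd1, hd2, hd3⟩ := hEP
  have hd4 : dist EP A₄ = dist EP A₁ := ((hd1.trans hd2).trans hd3).symm
  have h12 : A₁ ≠ A₂ := fun h => h1c (subset_convexHull ℝ _ (by rw [h]; simp))
  have h13 : A₁ ≠ A₃ := fun h => h1c (subset_convexHull ℝ _ (by rw [h]; simp))
  have h14 : A₁ ≠ A₄ := fun h => h1c (subset_convexHull ℝ _ (by rw [h]; simp))
  have h23 : A₂ ≠ A₃ := fun h => h2c (subset_convexHull ℝ _ (by rw [h]; simp))
  have h24 : A₂ ≠ A₄ := fun h => h2c (subset_convexHull ℝ _ (by rw [h]; simp))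
  have h34 : A₃ ≠ A₄ := fun h => h3c (subset_convexHull ℝ _ (by rw [h]; simp))
  obtain ⟨s, hs0w, hs1w, hXs⟩ := mem_segment_param.mp hX13
  obtain ⟨t, ht0w, ht1w, hXt⟩ := mem_segment_param.mp hX24
  have hs0 : 0 < s := by
    rcases lt_or_eq_of_le hs0w with h | h
    · exact h
    exfalso
    apply h1c
    have hXA : X = A₁ := by rw [hXs, ← h]; simp
    exact seg_sub_hull₂ A₂ A₃ A₄ (hXA ▸ hX24)
  have hs1 : s < 1 := by
    rcases lt_or_eq_of_le hs1w with h | h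
    · exact h
    exfalso
    apply h3c
    have hXA : X = A₃ := by rw [hXs, h, one_smul]; ring
    exact seg_sub_hull₃ A₁ A₂ A₄ (hXA ▸ hX24)
  have ht0 : 0 < t := by
    rcases lt_or_eq_of_le ht0w with h | h
    · exact h
    exfalso
    apply h2c
    have hXA : X = A₂ := by rw [hXt, ← h]; simp
    exact seg_sub_hull A₁ A₃ A₄ (hXA ▸ hX13)
  have ht1 : t < 1 := by
    rcases lt_or_eq_of_le ht1w with h | h
    · exact h
    exfalso
    apply h4c
    have hXA : X = A₄ := by rw [hXt, h, one_smul]; ring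
    exact seg_sub_hull₂ A₁ A₂ A₃ (hXA ▸ hX13)
  have hXeq : A₁ + s • (A₃ - A₁) = A₂ + t • (A₄ - A₂) := hXs.symm.trans hXt
  constructor
  · rintro ⟨E, f₁, f₂, a, ⟨hlt, hEeq⟩, hf12, ⟨T1, T2, T3, T4⟩, hfoc⟩
    have hw := not_para A₁ A₂ A₃ A₄ X s t hXs hXt h13 h24 h1c h2c h3c
    have hkey : ∃ g : ℂ, dist EP g < 2*a ∧ E = EllipseSet EP g a := by
      rcases hfoc with h | h
      · rw [h] at hlt hEeq
        exact ⟨f₂, hlt, hEeq⟩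
      · rw [h] at hlt hEeq
        refine ⟨f₁, by rw [dist_comm]; exact hlt, ?_⟩
        rw [hEeq, ellipse_comm]
    obtain ⟨g, hltg, hEg⟩ := hkey
    have e1 : dist (A₁+A₂-EP) g = 2*a := by
      obtain ⟨ζ, hζseg, hζeq⟩ := T1
      rw [hEg] at hζeq
      exact conv_tangency EP g A₁ A₂ a ζ h12 hd1 hltg hζeq
    have e2 : dist (A₂+A₃-EP) g = 2*a := by
      obtain ⟨ζ, hζseg, hζeq⟩ := T2
      rw [hEg] at hζeq
      exact conv_tangency EP g A₂ A₃ a ζ h23 hd2 hltg hζeq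
    have e3 : dist (A₃+A₄-EP) g = 2*a := by
      obtain ⟨ζ, hζseg, hζeq⟩ := T3
      rw [hEg] at hζeq
      exact conv_tangency EP g A₃ A₄ a ζ h34 hd3 hltg hζeq
    have e4 : dist (A₄+A₁-EP) g = 2*a := by
      obtain ⟨ζ, hζseg, hζeq⟩ := T4
      rw [hEg] at hζeq
      exact conv_tangency EP g A₄ A₁ a ζ h14.symm hd4 hltg hζeq
    exact conv_ortho A₁ A₂ A₃ A₄ EP g hw (e1.trans e2.symm) (e2.trans e3.symm) (e3.trans e4.symm)
  · intro hortho
    have horth : (A₃-A₁).re * (A₄-A₂).re + (A₃-A₁).im * (A₄-A₂).im = 0 := hortho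
    obtain ⟨aa, haadef⟩ : ∃ aa : ℝ, aa = ‖(A₃-A₁) + (A₄-A₂)‖ / 4 := ⟨_, rfl⟩
    have habs1 : ‖(A₃-A₁) + (A₄-A₂)‖ = 4*aa := by rw [haadef]; ring
    have habs2 : ‖(A₄-A₂) + (A₁-A₃)‖ = 4*aa := by
      rw [show (A₄-A₂) + (A₁-A₃) = ((A₄-A₂) - (A₃-A₁)) from by ring]
      rw [abs_perp_sub (A₃-A₁) (A₄-A₂) horth]
      exact habs1
    have habs3 : ‖(A₁-A₃) + (A₂-A₄)‖ = 4*aa := by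
      rw [show (A₁-A₃) + (A₂-A₄) = -((A₃-A₁) + (A₄-A₂)) from by ring, abs_neg']
      exact habs1
    have habs4 : ‖(A₂-A₄) + (A₃-A₁)‖ = 4*aa := by
      rw [show (A₂-A₄) + (A₃-A₁) = -((A₄-A₂) + (A₁-A₃)) from by ring, abs_neg']
      exact habs2
    have horth2 : (A₄-A₂).re * (A₁-A₃).re + (A₄-A₂).im * (A₁-A₃).im = 0 := by
      simp only [Complex.sub_re, Complex.sub_im] at horth ⊢
      linear_combination -horth
    have horth3 : (A₁-A₃).re * (A₂-A₄).re + (A₁-A₃).im * (A₂-A₄).im = 0 := by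
      simp only [Complex.sub_re, Complex.sub_im] at horth ⊢
      linear_combination horth
    have horth4 : (A₂-A₄).re * (A₃-A₁).re + (A₂-A₄).im * (A₃-A₁).im = 0 := by
      simp only [Complex.sub_re, Complex.sub_im] at horth ⊢
      linear_combination -horth
    have r1 : A₃ + (1-s) • (A₁-A₃) = A₁ + s • (A₃-A₁) := by
      simp only [Complex.real_smul]; push_cast; ring
    have r2 : A₄ + (1-t) • (A₂-A₄) = A₂ + t • (A₄-A₂) := by
      simp only [Complex.real_smul]; push_cast; ring
    have hX2 : A₂ + t • (A₄-A₂) = A₃ + (1-s) • (A₁-A₃) := by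
      rw [r1]; exact hXeq.symm
    have hX3 : A₃ + (1-s) • (A₁-A₃) = A₄ + (1-t) • (A₂-A₄) := by
      rw [r1, r2]; exact hXeq
    have hX4 : A₄ + (1-t) • (A₂-A₄) = A₁ + s • (A₃-A₁) := by
      rw [r2]; exact hXeq.symm
    have S1 := side_core EP A₁ A₂ A₃ A₄ s t aa hs0 hs1 ht0 ht1 hd1 hd2 hd3
      h13 h24 hXeq horth habs1
    have S2 := side_core EP A₂ A₃ A₄ A₁ t (1-s) aa ht0 ht1 (by linarith) (by linarith)
      hd2 hd3 hd4 h24 h13.symm hX2 horth2 habs2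
    have S3 := side_core EP A₃ A₄ A₁ A₂ (1-s) (1-t) aa (by linarith) (by linarith)
      (by linarith) (by linarith) hd3 hd4 hd1 h13.symm h24.symm hX3 horth3 habs3
    have S4 := side_core EP A₄ A₁ A₂ A₃ (1-t) s aa (by linarith) (by linarith) hs0 hs1
      hd4 hd1 hd2 h24.symm h13 hX4 horth4 habs4
    have hsum2 : A₂+A₃+A₄+A₁ = A₁+A₂+A₃+A₄ := by ring
    have hsum3 : A₃+A₄+A₁+A₂ = A₁+A₂+A₃+A₄ := by ring
    have hsum4 : A₄+A₁+A₂+A₃ = A₁+A₂+A₃+A₄ := by ring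
    rw [hsum2] at S2
    rw [hsum3] at S3
    rw [hsum4] at S4
    set f₂ : ℂ := (1/2 : ℝ) • (A₁+A₂+A₃+A₄) - EP with hf₂def
    obtain ⟨S11, S12, S13, S14, S15⟩ := S1
    obtain ⟨S21, S22, _, _, S25⟩ := S2
    obtain ⟨S31, S32, _, _, S35⟩ := S3
    obtain ⟨S41, S42, _, _, S45⟩ := S4
    refine ⟨EllipseSet EP f₂ aa, EP, f₂, aa, ⟨S13, rfl⟩, ?_, ⟨?_, ?_, ?_, ?_⟩, Or.inl rfl⟩
    · intro h
      exact hnp (S14 h.symm)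
    · obtain ⟨ζ, hζseg, hζeq⟩ := tangency EP f₂ A₁ A₂ aa h12 hd1
        (fun h => absurd (h ▸ S11) (ne_of_lt S13)) S11 S12
      have hζL : ζ ∈ LineThrough A₁ A₂ := by
        have hm : ζ ∈ EllipseSet EP f₂ aa ∩ LineThrough A₁ A₂ := by rw [hζeq]; rfl
        exact hm.2
      exact ⟨ζ, S15 ζ hζL hζseg, hζeq⟩
    · obtain ⟨ζ, hζseg, hζeq⟩ := tangency EP f₂ A₂ A₃ aa h23 hd2
        (fun h => absurd (h ▸ S21) (ne_of_lt S13)) S21 S22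
      have hζL : ζ ∈ LineThrough A₂ A₃ := by
        have hm : ζ ∈ EllipseSet EP f₂ aa ∩ LineThrough A₂ A₃ := by rw [hζeq]; rfl
        exact hm.2
      exact ⟨ζ, S25 ζ hζL hζseg, hζeq⟩
    · obtain ⟨ζ, hζseg, hζeq⟩ := tangency EP f₂ A₃ A₄ aa h34 hd3
        (fun h => absurd (h ▸ S31) (ne_of_lt S13)) S31 S32
      have hζL : ζ ∈ LineThrough A₃ A₄ := by
        have hm : ζ ∈ EllipseSet EP f₂ aa ∩ LineThrough A₃ A₄ := by rw [hζeq]; rfl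
        exact hm.2
      exact ⟨ζ, S35 ζ hζL hζseg, hζeq⟩
    · obtain ⟨ζ, hζseg, hζeq⟩ := tangency EP f₂ A₄ A₁ aa h14.symm hd4
        (fun h => absurd (h ▸ S41) (ne_of_lt S13)) S41 S42
      have hζL : ζ ∈ LineThrough A₄ A₁ := by
        have hm : ζ ∈ EllipseSet EP f₂ aa ∩ LineThrough A₄ A₁ := by rw [hζeq]; rfl
        exact hm.2
      exact ⟨ζ, S45 ζ hζL hζseg, hζeq⟩
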